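/- Let μ be a nonatomic Borel measure with full support on S¹ (every nonempty open set has positive measure and points have measure zero). For an arc (a,b) ⊂ S¹ define ζ_{ab}(s) = μ([a,s]) for s ∈ (a,b). Then each ζ_{ab} is a homeomorphism onto its image, and for two overlapping arcs the transition map ζ_{a'b'} ∘ ζ_{ab}⁻¹ is, on each connected component of its domain, a translation of an interval of ℝ. Hence these charts define a C^∞ atlas on S¹. -/

import Mathlib

open MeasureTheory Set Filter Topology

private lemma mk1_cont : Continuous (QuotientAddGroup.mk : ℝ → AddCircle (1 : ℝ)) :=
  QuotientAddGroup.continuous_mk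

private lemma mk1_meas (a s : ℝ) :
    MeasurableSet ((QuotientAddGroup.mk : ℝ → AddCircle (1 : ℝ)) '' Icc a s) :=
  ((isCompact_Icc.image mk1_cont).isClosed).measurableSet

private lemma mk1_inj {a x y : ℝ} (hx : x ∈ Ico a (a + 1)) (hy : y ∈ Ico a (a + 1))
    (h : (QuotientAddGroup.mk x : AddCircle (1 : ℝ)) = QuotientAddGroup.mk y) : x = y := by
  haveI : Fact ((0 : ℝ) < 1) := ⟨one_pos⟩
  exact (AddCircle.coe_eq_coe_iff_of_mem_Ico hx hy).mp h

private lemma mk1_int (x : ℝ) (n : ℤ) :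
    (QuotientAddGroup.mk (x + n) : AddCircle (1 : ℝ)) = QuotientAddGroup.mk x := by
  rw [QuotientAddGroup.eq]
  exact ⟨-n, by simp⟩

private lemma key_add (μ : Measure (AddCircle (1 : ℝ))) [IsFiniteMeasure μ]
    (hna : ∀ x : AddCircle (1 : ℝ), μ {x} = 0)
    {a s t : ℝ} (has : a ≤ s) (hst : s ≤ t) (hta : t - a < 1) :
    (μ ((QuotientAddGroup.mk : ℝ → AddCircle (1 : ℝ)) '' Icc a t)).toReal =
      (μ ((QuotientAddGroup.mk : ℝ → AddCircle (1 : ℝ)) '' Icc a s)).toReal +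
      (μ ((QuotientAddGroup.mk : ℝ → AddCircle (1 : ℝ)) '' Icc s t)).toReal := by
  set mk : ℝ → AddCircle (1 : ℝ) := QuotientAddGroup.mk with hmk
  have hsub1 : Icc a s ⊆ Ico a (a + 1) := fun x hx => ⟨hx.1, by
    have := hx.2; linarith⟩
  have hsub2 : Icc s t ⊆ Ico a (a + 1) := fun x hx => ⟨le_trans has hx.1, by
    have := hx.2; linarith⟩
  have hIcc : Icc a s ∪ Icc s t = Icc a t := Icc_union_Icc_eq_Icc has hst
  have hinter : mk '' Icc a s ∩ mk '' Icc s t = {mk s} := by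
    have h1 : mk '' Icc a s ∩ mk '' Icc s t = mk '' (Icc a s ∩ Icc s t) := by
      refine (image_inter_on fun x hx y hy hxy => ?_).symm
      exact mk1_inj (hsub1 hy) (hsub2 hx) hxy.symm |>.symm
    rw [h1, Icc_inter_Icc, max_eq_right has, min_eq_left hst, Icc_self, image_singleton]
  have hunion : μ (mk '' Icc a t) + μ {mk s} = μ (mk '' Icc a s) + μ (mk '' Icc s t) := by
    rw [← hIcc, image_union, ← hinter]
    exact measure_union_add_inter _ ((isCompact_Icc.image mk1_cont).isClosed).measurableSet
  rw [hna (mk s), add_zero] at hunion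
  rw [← ENNReal.toReal_add (measure_ne_top μ _) (measure_ne_top μ _), hunion]

private lemma key_pos (μ : Measure (AddCircle (1 : ℝ))) [IsFiniteMeasure μ]
    (hfull : ∀ U : Set (AddCircle (1 : ℝ)), IsOpen U → U.Nonempty → 0 < μ U)
    {s t : ℝ} (hst : s < t) :
    0 < (μ ((QuotientAddGroup.mk : ℝ → AddCircle (1 : ℝ)) '' Icc s t)).toReal := by
  set mk : ℝ → AddCircle (1 : ℝ) := QuotientAddGroup.mk with hmk
  have hopen : IsOpen (mk '' Ioo s t) := QuotientAddGroup.isOpenMap_coe _ isOpen_Ioo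
  have hne : (mk '' Ioo s t).Nonempty := (nonempty_Ioo.mpr hst).image _
  have h1 : 0 < μ (mk '' Icc s t) :=
    lt_of_lt_of_le (hfull _ hopen hne) (measure_mono (image_mono Ioo_subset_Icc_self))
  exact ENNReal.toReal_pos h1.ne' (measure_ne_top μ _)

private lemma key_small (μ : Measure (AddCircle (1 : ℝ))) [IsFiniteMeasure μ]
    (hna : ∀ x : AddCircle (1 : ℝ), μ {x} = 0) (s : ℝ) {ε : ℝ} (hε : 0 < ε) :
    ∃ δ > (0:ℝ), (μ ((QuotientAddGroup.mk : ℝ → AddCircle (1 : ℝ)) ''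
      Icc (s - δ) (s + δ))).toReal < ε := by
  set mk : ℝ → AddCircle (1 : ℝ) := QuotientAddGroup.mk with hmk
  set I : ℕ → Set ℝ := fun n => Icc (s - 1/(n+3)) (s + 1/(n+3)) with hI
  set F : ℕ → Set (AddCircle (1:ℝ)) := fun n => mk '' I n with hF
  have hpos : ∀ n : ℕ, (0:ℝ) < 1/(n+3) := fun n => by positivity
  have hIsub : ∀ n : ℕ, I n ⊆ Ico (s - 1/2) (s - 1/2 + 1) := by
    intro n x hx
    have h3 : 1/((n:ℝ)+3) ≤ 1/3 := by
      apply one_div_le_one_div_of_le (by norm_num)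
      have : (0:ℝ) ≤ n := Nat.cast_nonneg n
      linarith
    constructor
    · have := hx.1; linarith
    · have := hx.2; linarith
  have hanti : Antitone F := by
    intro m n hmn
    apply image_mono
    apply Icc_subset_Icc
    · have : 1/((n:ℝ)+3) ≤ 1/((m:ℝ)+3) := by
        apply one_div_le_one_div_of_le (by positivity)
        have : (m:ℝ) ≤ n := Nat.cast_le.mpr hmn
        linarith
      linarith
    · have : 1/((n:ℝ)+3) ≤ 1/((m:ℝ)+3) := by
        apply one_div_le_one_div_of_le (by positivity)
        have : (m:ℝ) ≤ n := Nat.cast_le.mpr hmn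
        linarith
      linarith
  have hIinter : ⋂ n, I n = {s} := by
    ext x
    simp only [mem_iInter, mem_singleton_iff, hI, mem_Icc]
    constructor
    · intro h
      by_contra hne
      have hr : 0 < |x - s| := abs_pos.mpr (sub_ne_zero.mpr hne)
      obtain ⟨n, hn⟩ := exists_nat_gt (1/|x - s|)
      have h1 : 1/|x - s| < (n:ℝ) + 3 := by linarith
      have h2 : 1/((n:ℝ)+3) < |x - s| := by
        rw [div_lt_iff₀ (by positivity)]
        rw [div_lt_iff₀ hr] at h1
        linarith [mul_comm |x - s| ((n:ℝ)+3)]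
      obtain ⟨h3a, h3b⟩ := h n
      have h4 : |x - s| ≤ 1/((n:ℝ)+3) := abs_sub_le_iff.mpr ⟨by linarith, by linarith⟩
      linarith
    · rintro rfl n
      exact ⟨by linarith [hpos n], by linarith [hpos n]⟩
  have hFinter : ⋂ n, F n = {mk s} := by
    have hinj : InjOn mk (⋃ n, I n) := by
      intro x hx y hy hxy
      rw [mem_iUnion] at hx hy
      obtain ⟨m, hm⟩ := hx; obtain ⟨k, hk⟩ := hy
      exact mk1_inj (hIsub m hm) (hIsub k hk) hxy
    rw [hF]
    rw [← hinj.image_iInter_eq, hIinter, image_singleton]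
  have htend : Tendsto (μ ∘ F) atTop (𝓝 0) := by
    have := tendsto_measure_iInter_atTop (μ := μ)
      (fun n => (((isCompact_Icc.image mk1_cont).isClosed).measurableSet).nullMeasurableSet)
      hanti ⟨0, measure_ne_top μ _⟩
    rwa [hFinter, hna (mk s)] at this
  have htend2 : Tendsto (fun n => (μ (F n)).toReal) atTop (𝓝 0) := by
    have := (ENNReal.tendsto_toReal (by simp : (0:ENNReal) ≠ ⊤)).comp htend
    exact this
  obtain ⟨n, hn⟩ := (htend2.eventually_lt_const hε).exists
  exact ⟨1/(n+3), hpos n, hn⟩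

/-- A nonatomic, fully supported finite Borel measure `μ` on the
circle defines charts `ζ_{ab}(s) = μ([a,s])` on arcs which are homeomorphisms
onto their images (strictly monotone and continuous), and whose transition maps
are translations of intervals of `ℝ`; hence they form a smooth atlas. -/
theorem stmt_4 (μ : Measure (AddCircle (1 : ℝ))) [IsFiniteMeasure μ]
    (hna : ∀ x : AddCircle (1 : ℝ), μ {x} = 0)
    (hfull : ∀ U : Set (AddCircle (1 : ℝ)), IsOpen U → U.Nonempty → 0 < μ U)
    (ζ : ℝ → ℝ → ℝ)
    (hζ : ∀ a s : ℝ, ζ a s =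
      (μ ((QuotientAddGroup.mk : ℝ → AddCircle (1 : ℝ)) '' Icc a s)).toReal) :
    (∀ a b : ℝ, a < b → b - a < 1 →
      StrictMonoOn (ζ a) (Ioo a b) ∧ ContinuousOn (ζ a) (Ioo a b)) ∧
    (∀ (a b a' b' : ℝ), a < b → b - a < 1 → a' < b' → b' - a' < 1 →
      ∀ (n : ℤ) (s t : ℝ), s ∈ Ioo a b → t ∈ Ioo a b → s ≤ t →
        s + n ∈ Ioo a' b' → t + n ∈ Ioo a' b' →
        ζ a' (t + n) - ζ a' (s + n) = ζ a t - ζ a s) := by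
  constructor
  · intro a b hab hba
    constructor
    · intro s hs t ht hst
      rw [hζ, hζ]
      have hk := key_add μ hna hs.1.le hst.le (by linarith [ht.2])
      have hp := key_pos μ hfull hst
      linarith
    · intro s hs
      rw [Metric.continuousWithinAt_iff]
      intro ε hε
      obtain ⟨δ, hδ, hδε⟩ := key_small μ hna s hε
      refine ⟨δ, hδ, fun t ht hts => ?_⟩
      rw [Real.dist_eq] at hts ⊢
      rw [hζ, hζ]
      obtain ⟨hts1, hts2⟩ := abs_lt.mp hts
      rcases le_total s t with h | h
      · have hk := key_add μ hna (a := a) hs.1.le h (by linarith [ht.2])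
        have hle : (μ ((QuotientAddGroup.mk : ℝ → AddCircle (1 : ℝ)) '' Icc s t)).toReal ≤
            (μ ((QuotientAddGroup.mk : ℝ → AddCircle (1 : ℝ)) ''
              Icc (s - δ) (s + δ))).toReal := by
          apply ENNReal.toReal_mono (measure_ne_top μ _)
          exact measure_mono (image_mono (Icc_subset_Icc (by linarith) (by linarith)))
        have hnn : 0 ≤ (μ ((QuotientAddGroup.mk : ℝ → AddCircle (1 : ℝ)) '' Icc s t)).toReal :=
          ENNReal.toReal_nonneg
        rw [hk, abs_of_nonneg (by linarith)]
        linarith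
      · have hk := key_add μ hna (a := a) ht.1.le h (by linarith [hs.2])
        have hle : (μ ((QuotientAddGroup.mk : ℝ → AddCircle (1 : ℝ)) '' Icc t s)).toReal ≤
            (μ ((QuotientAddGroup.mk : ℝ → AddCircle (1 : ℝ)) ''
              Icc (s - δ) (s + δ))).toReal := by
          apply ENNReal.toReal_mono (measure_ne_top μ _)
          exact measure_mono (image_mono (Icc_subset_Icc (by linarith) (by linarith)))
        have hnn : 0 ≤ (μ ((QuotientAddGroup.mk : ℝ → AddCircle (1 : ℝ)) '' Icc t s)).toReal :=
          ENNReal.toReal_nonneg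
        rw [hk, abs_of_nonpos (by linarith)]
        linarith
  · intro a b a' b' hab hba ha'b' hb'a' n s t hs ht hst hsn htn
    rw [hζ, hζ, hζ, hζ]
    have h1 := key_add μ hna (a := a) hs.1.le hst (by linarith [ht.2])
    have h2 := key_add μ hna (a := a') (s := s + (n:ℝ)) (t := t + (n:ℝ)) hsn.1.le (by linarith) (by linarith [htn.2])
    have him : (QuotientAddGroup.mk : ℝ → AddCircle (1 : ℝ)) '' Icc (s + n) (t + n) =
        (QuotientAddGroup.mk : ℝ → AddCircle (1 : ℝ)) '' Icc s t := by
      rw [← image_add_const_Icc (n : ℝ) s t, image_image]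
      exact image_congr fun x _ => mk1_int x n
    rw [h1, h2, him]
    ring
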